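/- Let g ≥ 4, let G be an r-regular graph of girth at least g, and let v_1, v_2 be two vertices at distance at least 2g+1. Let G° be obtained by deleting v_1, v_2 and adding the edges {v_{1j}, v_{2j}}, j = 1,...,r, pairing the neighbors of v_1 with those of v_2 under any bijection. Then G° is r-regular and has girth at least g. -/

import Mathlib

open Finset


open SimpleGraph (Walk)

namespace Rewire

variable {V : Type*}

/-- Rotation of a cycle: if `s ++ t` is a cycle then `t ++ s` is a cycle. -/
lemma isCycle_append_comm {H : SimpleGraph V} {v x : V} {s : H.Walk v x} {t : H.Walk x v}
    (h : (s.append t).IsCycle) : (t.append s).IsCycle := by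
  rw [Walk.isCycle_def, Walk.isTrail_def] at h ⊢
  obtain ⟨h1, h2, h3⟩ := h
  refine ⟨?_, ?_, ?_⟩
  · rw [Walk.edges_append] at h1 ⊢
    exact (List.perm_append_comm).nodup h1
  · intro hn
    apply h2
    have hl : (t.append s).length = 0 := by rw [hn]; rfl
    rw [Walk.length_append] at hl
    have hl2 : (s.append t).length = 0 := by rw [Walk.length_append]; omega
    cases s with
    | nil => cases t with
      | nil => exact hn
      | cons h p => simp [Walk.length_append] at hl
    | cons h p => simp [Walk.length_append] at hl
  · rw [Walk.tail_support_append] at h3 ⊢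
    exact (List.perm_append_comm).nodup h3

/-- every vertex in the support of a walk in a graph whose adjacency avoids `v₁, v₂`
is either the endpoint or avoids `v₁, v₂`. -/
lemma support_avoid {H : SimpleGraph V} {v₁ v₂ : V}
    (hA : ∀ {a b : V}, H.Adj a b → a ≠ v₁ ∧ a ≠ v₂) {a b : V} (p : H.Walk a b) :
    ∀ z ∈ p.support, z = b ∨ (z ≠ v₁ ∧ z ≠ v₂) := by
  induction p with
  | nil => intro z hz; left; simpa using hz
  | cons h q ih =>
    intro z hz
    rw [Walk.support_cons] at hz
    rcases List.mem_cons.mp hz with rfl | hz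
    · exact Or.inr (hA h)
    · exact ih z hz

/-- Decomposition of a walk at the first edge not belonging to `G`. -/
lemma first_new {G H : SimpleGraph V} (New : V → V → Prop)
    (hclass : ∀ {x y : V}, H.Adj x y → s(x, y) ∈ G.edgeSet ∨ New x y)
    {a b : V} (p : H.Walk a b) :
    (∀ e ∈ p.edges, e ∈ G.edgeSet) ∨
      ∃ (x y : V) (s : H.Walk a x) (h : H.Adj x y) (t : H.Walk y b),
        p = s.append (Walk.cons h t) ∧ (∀ e ∈ s.edges, e ∈ G.edgeSet) ∧ New x y := by
  induction p with
  | nil => left; intro e he; simp at he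
  | @cons a c b h q ih =>
    rcases hclass h with hold | hnew
    · rcases ih with hq | ⟨x, y, s, h', t, rfl, holds, hN⟩
      · left
        intro e he
        rw [Walk.edges_cons] at he
        rcases List.mem_cons.mp he with rfl | he
        · exact hold
        · exact hq e he
      · right
        refine ⟨x, y, Walk.cons h s, h', t, ?_, ?_, hN⟩
        · rw [Walk.cons_append]
        · intro e he
          rw [Walk.edges_cons] at he
          rcases List.mem_cons.mp he with rfl | he
          · exact hold
          · exact holds e he
    · right
      exact ⟨a, c, Walk.nil, h, q, by rw [Walk.nil_append], by intro e he; simp at he, hnew⟩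

end Rewire

/-- The graph `G°` obtained from `G` by the rewiring operation on the two vertices
`v₁, v₂`: all edges incident to `v₁` or `v₂` are removed (so `v₁, v₂` become isolated and
can be regarded as deleted), and for each `j` a new edge `{w₁ j, w₂ j}` is added, where
`w₁, w₂` enumerate the neighbors of `v₁` and of `v₂` respectively. -/
def rewired {V : Type*} (G : SimpleGraph V) (v₁ v₂ : V) {r : ℕ}
    (w₁ w₂ : Fin r → V) : SimpleGraph V where
  Adj a b := a ≠ b ∧
    ((G.Adj a b ∧ a ≠ v₁ ∧ a ≠ v₂ ∧ b ≠ v₁ ∧ b ≠ v₂) ∨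
      ∃ j : Fin r, (a = w₁ j ∧ b = w₂ j) ∨ (a = w₂ j ∧ b = w₁ j))
  symm := by
    constructor
    rintro a b ⟨hab, h⟩
    refine ⟨hab.symm, ?_⟩
    rcases h with ⟨h1, h2, h3, h4, h5⟩ | ⟨j, hj | hj⟩
    · exact Or.inl ⟨h1.symm, h4, h5, h2, h3⟩
    · exact Or.inr ⟨j, Or.inr ⟨hj.2, hj.1⟩⟩
    · exact Or.inr ⟨j, Or.inl ⟨hj.2, hj.1⟩⟩
  loopless := by constructor; rintro a ⟨h, -⟩; exact h rfl

lemma rewired_adj {V : Type*} (G : SimpleGraph V) (v₁ v₂ : V) {r : ℕ}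
    (w₁ w₂ : Fin r → V) (a b : V) :
    (rewired G v₁ v₂ w₁ w₂).Adj a b ↔ a ≠ b ∧
    ((G.Adj a b ∧ a ≠ v₁ ∧ a ≠ v₂ ∧ b ≠ v₁ ∧ b ≠ v₂) ∨
      ∃ j : Fin r, (a = w₁ j ∧ b = w₂ j) ∨ (a = w₂ j ∧ b = w₁ j)) := Iff.rfl

/-- if `G` is `r`-regular with girth at least `g ≥ 4` and `v₁, v₂` are at
distance at least `2g+1`, then the rewired graph `G°` (restricted to the remaining
vertices `V ∖ {v₁, v₂}`) is again `r`-regular with girth at least `g`. -/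
theorem statement14 {V : Type*} [Fintype V] (G : SimpleGraph V) (g r : ℕ) (hg : 4 ≤ g)
    (hgirth : (g : ℕ∞) ≤ G.egirth)
    (hreg : ∀ v : V, (G.neighborSet v).ncard = r)
    (v₁ v₂ : V) (hdist : ((2 * g + 1 : ℕ) : ℕ∞) ≤ G.edist v₁ v₂)
    (w₁ w₂ : Fin r → V) (hw₁ : Function.Injective w₁) (hw₂ : Function.Injective w₂)
    (hrange₁ : Set.range w₁ = G.neighborSet v₁) (hrange₂ : Set.range w₂ = G.neighborSet v₂) :
    (∀ v : {x : V // x ≠ v₁ ∧ x ≠ v₂},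
        (((rewired G v₁ v₂ w₁ w₂).induce {x : V | x ≠ v₁ ∧ x ≠ v₂}).neighborSet v).ncard = r)
      ∧ (g : ℕ∞) ≤ ((rewired G v₁ v₂ w₁ w₂).induce {x : V | x ≠ v₁ ∧ x ≠ v₂}).egirth := by
  set G' := rewired G v₁ v₂ w₁ w₂ with hG'def
  -- basic adjacency facts
  have hadj₁ : ∀ j, G.Adj v₁ (w₁ j) := fun j => by
    have : w₁ j ∈ G.neighborSet v₁ := hrange₁ ▸ Set.mem_range_self j
    exact this
  have hadj₂ : ∀ j, G.Adj v₂ (w₂ j) := fun j => by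
    have : w₂ j ∈ G.neighborSet v₂ := hrange₂ ▸ Set.mem_range_self j
    exact this
  have hWalk : ∀ p : G.Walk v₁ v₂, 2 * g + 1 ≤ p.length := fun p => by
    have h := hdist.trans (SimpleGraph.edist_le p)
    exact_mod_cast h
  have hcycle : ∀ {u : V} (c : G.Walk u u), c.IsCycle → g ≤ c.length := by
    intro u c hc
    have h := SimpleGraph.le_egirth.mp hgirth u c hc
    exact_mod_cast h
  -- derived distance facts
  have hnadj : ¬ G.Adj v₁ v₂ := fun h => by
    have := hWalk (Walk.cons h Walk.nil); simp at this; omega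
  have hnot_both : ∀ a : V, G.Adj v₁ a → G.Adj v₂ a → False := fun a h1 h2 => by
    have := hWalk (Walk.cons h1 (Walk.cons h2.symm Walk.nil)); simp at this; omega
  have hno_near : ∀ a b : V, G.Adj v₁ a → G.Adj v₂ b → ¬ G.Adj a b := fun a b h1 h2 hab => by
    have := hWalk (Walk.cons h1 (Walk.cons hab (Walk.cons h2.symm Walk.nil)))
    simp at this; omega
  have hn₁₂ : ∀ j k, w₁ j ≠ w₂ k := fun j k h => by
    exact hnot_both (w₁ j) (hadj₁ j) (h ▸ hadj₂ k)
  have hw₁v₁ : ∀ j, w₁ j ≠ v₁ := fun j h => G.irrefl (h ▸ hadj₁ j)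
  have hw₂v₂ : ∀ j, w₂ j ≠ v₂ := fun j h => G.irrefl (h ▸ hadj₂ j)
  have hw₁v₂ : ∀ j, w₁ j ≠ v₂ := fun j h => hnadj (h ▸ hadj₁ j)
  have hw₂v₁ : ∀ j, w₂ j ≠ v₁ := fun j h => hnadj (h ▸ hadj₂ j).symm
  -- every endpoint of a rewired edge avoids v₁, v₂
  have hA : ∀ {a b : V}, G'.Adj a b → a ≠ v₁ ∧ a ≠ v₂ := by
    intro a b h
    rw [hG'def, rewired_adj] at h
    rcases h.2 with ⟨_, h2, h3, _, _⟩ | ⟨j, ⟨rfl, _⟩ | ⟨rfl, _⟩⟩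
    · exact ⟨h2, h3⟩
    · exact ⟨hw₁v₁ j, hw₁v₂ j⟩
    · exact ⟨hw₂v₁ j, hw₂v₂ j⟩
  constructor
  · -- regularity
    intro v
    have hnbhd : ∀ a : V, a ≠ v₁ → a ≠ v₂ → (G'.neighborSet a).ncard = r := by
      intro a ha1 ha2
      by_cases h1 : G.Adj v₁ a
      · obtain ⟨j, rfl⟩ : ∃ j, w₁ j = a := by
          have : a ∈ Set.range w₁ := hrange₁ ▸ h1
          exact this
        have hset : G'.neighborSet (w₁ j) = insert (w₂ j) (G.neighborSet (w₁ j) \ {v₁}) := by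
          ext b
          simp only [SimpleGraph.mem_neighborSet, Set.mem_insert_iff, Set.mem_diff,
            Set.mem_singleton_iff]
          constructor
          · intro h
            rw [hG'def, rewired_adj] at h
            rcases h.2 with ⟨hab, _, _, hb1, _⟩ | ⟨j', ⟨hx, hy⟩ | ⟨hx, _⟩⟩
            · exact Or.inr ⟨hab, hb1⟩
            · exact Or.inl (by rw [hy, hw₁ hx])
            · exact absurd hx (hn₁₂ j j')
          · rintro (rfl | ⟨hab, hb1⟩)
            · rw [hG'def, rewired_adj]
              exact ⟨hn₁₂ j j, Or.inr ⟨j, Or.inl ⟨rfl, rfl⟩⟩⟩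
            · rw [hG'def, rewired_adj]
              refine ⟨hab.ne, Or.inl ⟨hab, hw₁v₁ j, hw₁v₂ j, hb1, ?_⟩⟩
              intro hb2
              exact hnot_both (w₁ j) h1 (hb2 ▸ hab).symm
        rw [hset]
        have hmem : v₁ ∈ G.neighborSet (w₁ j) := (hadj₁ j).symm
        have hnm : w₂ j ∉ G.neighborSet (w₁ j) \ {v₁} := by
          intro ⟨hmem2, _⟩
          exact hno_near (w₁ j) (w₂ j) (hadj₁ j) (hadj₂ j) hmem2
        rw [Set.ncard_insert_of_notMem hnm, Set.ncard_diff_singleton_of_mem hmem, hreg]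
        have : 0 < r := j.pos
        omega
      · by_cases h2 : G.Adj v₂ a
        · obtain ⟨j, rfl⟩ : ∃ j, w₂ j = a := by
            have : a ∈ Set.range w₂ := hrange₂ ▸ h2
            exact this
          have hset : G'.neighborSet (w₂ j) = insert (w₁ j) (G.neighborSet (w₂ j) \ {v₂}) := by
            ext b
            simp only [SimpleGraph.mem_neighborSet, Set.mem_insert_iff, Set.mem_diff,
              Set.mem_singleton_iff]
            constructor
            · intro h
              rw [hG'def, rewired_adj] at h
              rcases h.2 with ⟨hab, _, _, _, hb2⟩ | ⟨j', ⟨hx, _⟩ | ⟨hx, hy⟩⟩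
              · exact Or.inr ⟨hab, hb2⟩
              · exact absurd hx.symm (hn₁₂ j' j)
              · exact Or.inl (by rw [hy, hw₂ hx])
            · rintro (rfl | ⟨hab, hb2⟩)
              · rw [hG'def, rewired_adj]
                exact ⟨(hn₁₂ j j).symm, Or.inr ⟨j, Or.inr ⟨rfl, rfl⟩⟩⟩
              · rw [hG'def, rewired_adj]
                refine ⟨hab.ne, Or.inl ⟨hab, hw₂v₁ j, hw₂v₂ j, ?_, hb2⟩⟩
                intro hb1
                exact hnot_both (w₂ j) (hb1 ▸ hab).symm h2
          rw [hset]
          have hmem : v₂ ∈ G.neighborSet (w₂ j) := (hadj₂ j).symm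
          have hnm : w₁ j ∉ G.neighborSet (w₂ j) \ {v₂} := by
            intro ⟨hmem2, _⟩
            exact hno_near (w₁ j) (w₂ j) (hadj₁ j) (hadj₂ j) hmem2.symm
          rw [Set.ncard_insert_of_notMem hnm, Set.ncard_diff_singleton_of_mem hmem, hreg]
          have : 0 < r := j.pos
          omega
        · have hset : G'.neighborSet a = G.neighborSet a := by
            ext b
            simp only [SimpleGraph.mem_neighborSet]
            constructor
            · intro h
              rw [hG'def, rewired_adj] at h
              rcases h.2 with ⟨hab, _⟩ | ⟨j, ⟨rfl, _⟩ | ⟨rfl, _⟩⟩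
              · exact hab
              · exact absurd (hadj₁ j) h1
              · exact absurd (hadj₂ j) h2
            · intro hab
              rw [hG'def, rewired_adj]
              refine ⟨hab.ne, Or.inl ⟨hab, ha1, ha2, ?_, ?_⟩⟩
              · intro hb1; exact h1 (hb1 ▸ hab).symm
              · intro hb2; exact h2 (hb2 ▸ hab).symm
          rw [hset, hreg]
    have himg : Subtype.val '' ((G'.induce {x : V | x ≠ v₁ ∧ x ≠ v₂}).neighborSet v)
        = G'.neighborSet v.1 := by
      ext x
      simp only [Set.mem_image, SimpleGraph.mem_neighborSet]
      constructor
      · rintro ⟨y, hy, rfl⟩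
        exact hy
      · intro h
        exact ⟨⟨x, hA h.symm⟩, h, rfl⟩
    have hcard := Set.ncard_image_of_injective
      ((G'.induce {x : V | x ≠ v₁ ∧ x ≠ v₂}).neighborSet v) Subtype.val_injective
    rw [himg] at hcard
    rw [← hcard]
    exact hnbhd v.1 v.2.1 v.2.2
  · -- girth
    have hclass : ∀ {x y : V}, G'.Adj x y → s(x, y) ∈ G.edgeSet ∨
        (∃ j : Fin r, (x = w₁ j ∧ y = w₂ j) ∨ (x = w₂ j ∧ y = w₁ j)) := by
      intro x y h
      rw [hG'def, rewired_adj] at h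
      rcases h.2 with ⟨hab, _⟩ | hnew
      · exact Or.inl (G.mem_edgeSet.mpr hab)
      · exact Or.inr hnew
    have hmain : ∀ (z : V) (c : G'.Walk z z), c.IsCycle → g ≤ c.length := by
      intro z c hc
      by_contra hlt
      push_neg at hlt
      rcases Rewire.first_new _ hclass c with hOld | ⟨x, y, s, e, t, rfl, hOlds, j, hside⟩
      · have := hcycle (c.transfer G hOld) (hc.transfer hOld)
        rw [Walk.length_transfer] at this
        omega
      · have hlen : s.length + (t.length + 1) < g := by
          rw [Walk.length_append, Walk.length_cons] at hlt
          exact hlt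
        have hq2 : ((Walk.cons e t).append s).IsCycle := Rewire.isCycle_append_comm hc
        rw [Walk.cons_append] at hq2
        obtain ⟨hupath, huedge⟩ := (SimpleGraph.Walk.cons_isCycle_iff _ e).mp hq2
        rcases Rewire.first_new _ hclass (t.append s) with
          hOldU | ⟨x₂, y₂, s₂, e₂, t₂, hueq, hOld₂, j₂, hside₂⟩
        · -- exactly one new edge: short v₁-v₂ walk
          rcases hside with ⟨rfl, rfl⟩ | ⟨rfl, rfl⟩
          · have hWl := hWalk (Walk.cons (hadj₁ j)
              (((t.append s).transfer G hOldU).reverse.concat (hadj₂ j).symm))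
            simp only [Walk.length_cons, Walk.length_concat, Walk.length_reverse,
              Walk.length_transfer, Walk.length_append] at hWl
            omega
          · have hWl := hWalk (Walk.cons (hadj₁ j)
              (((t.append s).transfer G hOldU).concat (hadj₂ j).symm))
            simp only [Walk.length_cons, Walk.length_concat,
              Walk.length_transfer, Walk.length_append] at hWl
            omega
        · have hs₂path : s₂.IsPath := SimpleGraph.Walk.IsPath.of_append_left (hueq ▸ hupath)
          have hulen : t.length + s.length = s₂.length + (t₂.length + 1) := by
            have h := congrArg Walk.length hueq
            rwa [Walk.length_append, Walk.length_append, Walk.length_cons] at h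
          have hsupp := Rewire.support_avoid hA s₂
          have huedge2 : s(x, y) ∉ (s₂.append (Walk.cons e₂ t₂)).edges := hueq ▸ huedge
          rcases hside with ⟨rfl, rfl⟩ | ⟨rfl, rfl⟩
          · rcases hside₂ with ⟨rfl, rfl⟩ | ⟨rfl, rfl⟩
            · -- cross: s₂ : w₂ j → w₁ j₂
              have hWl := hWalk (Walk.cons (hadj₁ j₂)
                ((s₂.transfer G hOld₂).reverse.concat (hadj₂ j).symm))
              simp only [Walk.length_cons, Walk.length_concat, Walk.length_reverse,
                Walk.length_transfer] at hWl
              omega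
            · -- same side v₂: s₂ : w₂ j → w₂ j₂
              by_cases hjj : j = j₂
              · subst hjj
                apply huedge2
                rw [Walk.edges_append, Walk.edges_cons]
                refine List.mem_append_right _ ?_
                rw [Sym2.eq_swap]
                exact List.mem_cons_self
              · have hne' : w₂ j ≠ w₂ j₂ := fun h => hjj (hw₂ h)
                have hv₂s : v₂ ∉ s₂.support := by
                  intro hm
                  rcases hsupp v₂ hm with h | ⟨_, h⟩
                  · exact hw₂v₂ j₂ h.symm
                  · exact h rfl
                have hcyc : (Walk.cons (hadj₂ j)
                    ((s₂.transfer G hOld₂).concat (hadj₂ j₂).symm)).IsCycle := by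
                  rw [SimpleGraph.Walk.cons_isCycle_iff]
                  constructor
                  · rw [← SimpleGraph.Walk.isPath_reverse_iff, Walk.reverse_concat,
                      SimpleGraph.Walk.cons_isPath_iff]
                    refine ⟨(hs₂path.transfer hOld₂).reverse, ?_⟩
                    rw [Walk.support_reverse, List.mem_reverse, Walk.support_transfer]
                    exact hv₂s
                  · intro hmem
                    rw [Walk.edges_concat, List.concat_eq_append, List.mem_append] at hmem
                    rcases hmem with h | h
                    · rw [Walk.edges_transfer] at h
                      exact hv₂s (s₂.fst_mem_support_of_mem_edges h)
                    · rw [List.mem_singleton, Sym2.eq_iff] at h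
                      rcases h with ⟨h1, _⟩ | ⟨_, h2⟩
                      · exact hw₂v₂ j₂ h1.symm
                      · exact hne' h2
                have hgl := hcycle _ hcyc
                simp only [Walk.length_cons, Walk.length_concat, Walk.length_transfer] at hgl
                omega
          · rcases hside₂ with ⟨rfl, rfl⟩ | ⟨rfl, rfl⟩
            · -- same side v₁: s₂ : w₁ j → w₁ j₂
              by_cases hjj : j = j₂
              · subst hjj
                apply huedge2
                rw [Walk.edges_append, Walk.edges_cons]
                refine List.mem_append_right _ ?_
                rw [Sym2.eq_swap]
                exact List.mem_cons_self
              · have hne' : w₁ j ≠ w₁ j₂ := fun h => hjj (hw₁ h)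
                have hv₁s : v₁ ∉ s₂.support := by
                  intro hm
                  rcases hsupp v₁ hm with h | ⟨h, _⟩
                  · exact hw₁v₁ j₂ h.symm
                  · exact h rfl
                have hcyc : (Walk.cons (hadj₁ j)
                    ((s₂.transfer G hOld₂).concat (hadj₁ j₂).symm)).IsCycle := by
                  rw [SimpleGraph.Walk.cons_isCycle_iff]
                  constructor
                  · rw [← SimpleGraph.Walk.isPath_reverse_iff, Walk.reverse_concat,
                      SimpleGraph.Walk.cons_isPath_iff]
                    refine ⟨(hs₂path.transfer hOld₂).reverse, ?_⟩
                    rw [Walk.support_reverse, List.mem_reverse, Walk.support_transfer]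
                    exact hv₁s
                  · intro hmem
                    rw [Walk.edges_concat, List.concat_eq_append, List.mem_append] at hmem
                    rcases hmem with h | h
                    · rw [Walk.edges_transfer] at h
                      exact hv₁s (s₂.fst_mem_support_of_mem_edges h)
                    · rw [List.mem_singleton, Sym2.eq_iff] at h
                      rcases h with ⟨h1, _⟩ | ⟨_, h2⟩
                      · exact hw₁v₁ j₂ h1.symm
                      · exact hne' h2
                have hgl := hcycle _ hcyc
                simp only [Walk.length_cons, Walk.length_concat, Walk.length_transfer] at hgl
                omega
            · -- cross: s₂ : w₁ j → w₂ j₂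
              have hWl := hWalk (Walk.cons (hadj₁ j)
                ((s₂.transfer G hOld₂).concat (hadj₂ j₂).symm))
              simp only [Walk.length_cons, Walk.length_concat,
                Walk.length_transfer] at hWl
              omega
    rw [SimpleGraph.le_egirth]
    intro a wlk hw
    have hcyc2 : (wlk.map (⟨Subtype.val, fun {a b} h => h⟩ :
        (G'.induce {x : V | x ≠ v₁ ∧ x ≠ v₂}) →g G')).IsCycle :=
      (SimpleGraph.Walk.map_isCycle_iff_of_injective Subtype.val_injective).mpr hw
    have hfin := hmain _ _ hcyc2
    rw [SimpleGraph.Walk.length_map] at hfin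
    exact_mod_cast hfin
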